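/- Let G be a graph without universal vertices, s a simplicial vertex of G, and K a clique of G^s contained in N_G(s). If K has no witness, then every inclusion-minimal unwitnessed subset K′ of K has at least three vertices. -/

import Mathlib

/-- The closed neighborhood `N[v]` of a vertex. -/
def closedNbr {V : Type*} (G : SimpleGraph V) (v : V) : Set V := insert v (G.neighborSet v)

/-- A vertex is simplicial if its closed neighborhood is a clique. -/
def Simplicial {V : Type*} (G : SimpleGraph V) (s : V) : Prop := G.IsClique (closedNbr G s)

/-- A vertex is universal if it is adjacent to all other vertices. -/
def Universal {V : Type*} (G : SimpleGraph V) (v : V) : Prop := ∀ u, u ≠ v → G.Adj v u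

/-- The auxiliary graph `G^s` with respect to a simplicial vertex `s`. -/
def auxGraph {V : Type*} (G : SimpleGraph V) (s : V) : SimpleGraph V where
  Adj u v := u ≠ v ∧
    ((u ∉ closedNbr G s ∧ v ∉ closedNbr G s ∧ G.Adj u v) ∨
     (u ∈ closedNbr G s ∧ v ∈ closedNbr G s ∧ G.neighborSet u ∪ G.neighborSet v ≠ Set.univ) ∨
     (u ∈ closedNbr G s ∧ v ∉ closedNbr G s ∧ ¬ closedNbr G v ⊆ closedNbr G u) ∨
     (v ∈ closedNbr G s ∧ u ∉ closedNbr G s ∧ ¬ closedNbr G u ⊆ closedNbr G v))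
  symm := by
    constructor
    rintro u v ⟨hne, h⟩
    refine ⟨hne.symm, ?_⟩
    rcases h with ⟨h1, h2, h3⟩ | ⟨h1, h2, h3⟩ | h | h
    · exact Or.inl ⟨h2, h1, h3.symm⟩
    · exact Or.inr (Or.inl ⟨h2, h1, by rwa [Set.union_comm] at h3⟩)
    · exact Or.inr (Or.inr (Or.inr h))
    · exact Or.inr (Or.inr (Or.inl h))
  loopless := ⟨fun v h => h.1 rfl⟩

/-- A witness of an edge `uv` of `G^s`: a vertex `w ∉ N_G[s]` such that for each end `x`,
`w` is adjacent to `x` in `G` iff `x ∉ N_G[s]`. -/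
def EdgeWitness {V : Type*} (G : SimpleGraph V) (s u v w : V) : Prop :=
  w ∉ closedNbr G s ∧ (G.Adj w u ↔ u ∉ closedNbr G s) ∧ (G.Adj w v ↔ v ∉ closedNbr G s)

/-- An edge of `G^s` is collateral if it is an edge of `G` and one end is in `N_G[s]`. -/
def Collateral {V : Type*} (G : SimpleGraph V) (s u v : V) : Prop :=
  (auxGraph G s).Adj u v ∧ G.Adj u v ∧ (u ∈ closedNbr G s ∨ v ∈ closedNbr G s)

/-- A witness of a clique `K` of `G^s`: a vertex `w ∉ N_G[s]` such that `N_G[w] ∩ K` and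
`N_G[s] ∩ K` partition `K`. -/
def CliqueWitness {V : Type*} (G : SimpleGraph V) (s : V) (K : Set V) (w : V) : Prop :=
  w ∉ closedNbr G s ∧ ∀ x ∈ K, (x ∈ closedNbr G w ↔ x ∉ closedNbr G s)

/-- A graph is chordal if it has no induced cycle of length at least four. -/
def Chordal {V : Type*} (G : SimpleGraph V) : Prop :=
  ¬ ∃ (n : ℕ) (f : ZMod n → V), 4 ≤ n ∧ Function.Injective f ∧
      ∀ i j : ZMod n, G.Adj (f i) (f j) ↔ (j = i + 1 ∨ i = j + 1)

/-- If G has no universal vertex, s is simplicial, and K is an unwitnessed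
clique of G^s contained in N_G(s), then every inclusion-minimal unwitnessed subset of K
has at least three vertices. -/
theorem stmt_8 {V : Type*} [Fintype V] (G : SimpleGraph V) (s : V) (K : Set V)
    (hno : ∀ v : V, ¬ Universal G v) (hs : Simplicial G s)
    (hK : (auxGraph G s).IsClique K) (hKs : K ⊆ G.neighborSet s)
    (hKnw : ¬ ∃ w : V, CliqueWitness G s K w) :
    ∀ K' : Set V, K' ⊆ K → (¬ ∃ w : V, CliqueWitness G s K' w) →
      (∀ K'' : Set V, K'' ⊆ K' → K'' ≠ K' → ∃ w : V, CliqueWitness G s K'' w) →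
      3 ≤ K'.ncard := by
  intro K' hK'K hK'nw _hmin
  by_contra hlt
  push_neg at hlt
  -- membership in closed neighborhoods
  have hmem : ∀ x y : V, x ∈ closedNbr G y ↔ x = y ∨ G.Adj y x := by
    intro x y
    simp [closedNbr, SimpleGraph.mem_neighborSet]
  have hKcl : ∀ x ∈ K', x ∈ closedNbr G s := by
    intro x hx
    exact (hmem x s).2 (Or.inr (hKs (hK'K hx)))
  apply hK'nw
  interval_cases h : K'.ncard
  · -- K' empty
    have hKe : K' = ∅ := (Set.ncard_eq_zero (Set.toFinite K')).1 h
    have := hno s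
    unfold Universal at this
    push_neg at this
    obtain ⟨u, hus, hnadj⟩ := this
    refine ⟨u, ?_, ?_⟩
    · rw [hmem]; push_neg; exact ⟨hus, hnadj⟩
    · intro x hx; rw [hKe] at hx; exact absurd hx (Set.notMem_empty x)
  · -- K' singleton
    obtain ⟨a, ha⟩ := Set.ncard_eq_one.1 h
    have haK : a ∈ K' := ha ▸ Set.mem_singleton a
    have hacl : a ∈ closedNbr G s := hKcl a haK
    have := hno a
    unfold Universal at this
    push_neg at this
    obtain ⟨u, hua, hnadj⟩ := this
    have hucl : u ∉ closedNbr G s := by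
      intro hu
      exact hnadj (hs hacl hu (Ne.symm hua))
    refine ⟨u, hucl, ?_⟩
    intro x hx
    rw [ha, Set.mem_singleton_iff] at hx
    subst hx
    constructor
    · intro hxu
      rcases (hmem x u).1 hxu with rfl | hadj
      · exact absurd hacl hucl
      · exact absurd hadj.symm hnadj
    · intro hns; exact absurd hacl hns
  · -- K' pair
    obtain ⟨a, b, hab, hab2⟩ := Set.ncard_eq_two.1 h
    have haK : a ∈ K' := hab2 ▸ Set.mem_insert a {b}
    have hbK : b ∈ K' := hab2 ▸ Set.mem_insert_of_mem a rfl
    have hacl : a ∈ closedNbr G s := hKcl a haK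
    have hbcl : b ∈ closedNbr G s := hKcl b hbK
    have hadj : (auxGraph G s).Adj a b := hK (hK'K haK) (hK'K hbK) hab
    obtain ⟨_, hcase⟩ := hadj
    have hne : G.neighborSet a ∪ G.neighborSet b ≠ Set.univ := by
      rcases hcase with ⟨h1, _, _⟩ | ⟨_, _, h3⟩ | ⟨_, h2, _⟩ | ⟨_, h2, _⟩
      · exact absurd hacl h1
      · exact h3
      · exact absurd hbcl h2
      · exact absurd hacl h2
    obtain ⟨w, hw⟩ := Set.ne_univ_iff_exists_notMem _ |>.1 hne
    rw [Set.mem_union] at hw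
    push_neg at hw
    obtain ⟨hwa, hwb⟩ := hw
    rw [SimpleGraph.mem_neighborSet] at hwa hwb
    have hwcl : w ∉ closedNbr G s := by
      intro hwc
      by_cases hwa' : w = a
      · subst hwa'
        exact hwb (hs hwc hbcl hab).symm
      · exact hwa (hs hacl hwc (Ne.symm hwa'))
    refine ⟨w, hwcl, ?_⟩
    intro x hx
    have hxcl : x ∈ closedNbr G s := hKcl x hx
    constructor
    · intro hxw
      rcases (hmem x w).1 hxw with rfl | hadjw
      · exact absurd hxcl hwcl
      · rw [hab2, Set.mem_insert_iff, Set.mem_singleton_iff] at hx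
        rcases hx with rfl | rfl
        · exact absurd hadjw.symm hwa
        · exact absurd hadjw.symm hwb
    · intro hns; exact absurd hxcl hns
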